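/- Block-exponential formula for the Local Linearization scheme: for h ≥ 0, the top block row of the matrix exponential exp(h·C) is given by E₁₁ = exp(h·A), E₁₂ = ∫₀ʰ exp((h−s)·A)·B ds, E₁₃ = ∫₀ʰ exp((h−s)·A)·a ds, and E₁₄ = ∫₀ʰ exp((h−s)·A)·(b + s·a) ds, where E₁₁, E₁₂, E₁₃, E₁₄ denote respectively the d×d, d×p, d×1 and d×1 blocks in the first block row of exp(h·C). -/

import Mathlib

open Matrix

section BlockExpAuxSection
open Matrix NormedSpace
open scoped Nat

namespace BlockExpAux

attribute [local instance] Matrix.linftyOpNormedAddCommGroup Matrix.linftyOpNormedRing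
  Matrix.linftyOpNormedAlgebra

variable {m n : Type*} [Fintype m] [DecidableEq m] [Fintype n] [DecidableEq n]

/-- Entry evaluation as a continuous linear map. -/
def entryCLM (i : m) (j : n) : Matrix m n ℝ →L[ℝ] ℝ :=
  { toFun := fun M => M i j
    map_add' := fun _ _ => rfl
    map_smul' := fun _ _ => rfl
    cont := (continuous_apply j).comp (continuous_apply i) }

theorem exp_entry (M : Matrix m m ℝ) (i j : m) :
    exp M i j = ∑' k : ℕ, (k !⁻¹ : ℝ) • (M ^ k) i j := by
  rw [congrFun (exp_eq_tsum (𝕂 := ℝ) (𝔸 := Matrix m m ℝ)) M]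
  exact ((entryCLM i j).map_tsum (expSeries_summable' (𝕂 := ℝ) M))

theorem pow_blockDiag (A : Matrix m m ℝ) (N : Matrix n n ℝ) (k : ℕ) :
    (fromBlocks A 0 0 N) ^ k = fromBlocks (A ^ k) 0 0 (N ^ k) := by
  induction k with
  | zero => simp [Matrix.fromBlocks_one]
  | succ k ih =>
      rw [pow_succ, pow_succ, pow_succ, ih, Matrix.fromBlocks_multiply]
      simp

theorem pow_blockTri (A : Matrix m m ℝ) (D : Matrix m n ℝ) (N : Matrix n n ℝ) (k : ℕ) :
    ∃ X, (fromBlocks A D 0 N) ^ k = fromBlocks (A ^ k) X 0 (N ^ k) := by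
  induction k with
  | zero => exact ⟨0, by simp [Matrix.fromBlocks_one]⟩
  | succ k ih =>
      obtain ⟨X, hX⟩ := ih
      refine ⟨A ^ k * D + X * N, ?_⟩
      rw [pow_succ, pow_succ, pow_succ, hX, Matrix.fromBlocks_multiply]
      simp

theorem exp_blockDiag (A : Matrix m m ℝ) (N : Matrix n n ℝ) :
    exp (fromBlocks A 0 0 N) = fromBlocks (exp A) 0 0 (exp N) := by
  ext i j
  rcases i with i | i <;> rcases j with j | j <;>
    simp only [exp_entry, pow_blockDiag, Matrix.fromBlocks_apply₁₁, Matrix.fromBlocks_apply₁₂,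
      Matrix.fromBlocks_apply₂₁, Matrix.fromBlocks_apply₂₂, Matrix.zero_apply, smul_zero,
      tsum_zero]

theorem exp_blockTri (A : Matrix m m ℝ) (D : Matrix m n ℝ) (N : Matrix n n ℝ) :
    ∃ X, exp (fromBlocks A D 0 N) = fromBlocks (exp A) X 0 (exp N) := by
  refine ⟨(exp (fromBlocks A D 0 N)).toBlocks₁₂, ?_⟩
  ext i j
  rcases i with i | i <;> rcases j with j | j
  · have hA : ∀ k : ℕ, ((fromBlocks A D 0 N) ^ k) (Sum.inl i) (Sum.inl j) = (A ^ k) i j := by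
      intro k
      obtain ⟨X, hX⟩ := pow_blockTri A D N k
      rw [hX]; rfl
    simp only [exp_entry, hA, Matrix.fromBlocks_apply₁₁]
  · simp [Matrix.toBlocks₁₂]
  · have h0 : ∀ k : ℕ, ((fromBlocks A D 0 N) ^ k) (Sum.inr i) (Sum.inl j) = 0 := by
      intro k
      obtain ⟨X, hX⟩ := pow_blockTri A D N k
      rw [hX]; rfl
    simp only [exp_entry, h0, Matrix.fromBlocks_apply₂₁, Matrix.zero_apply, smul_zero, tsum_zero]
  · have hN : ∀ k : ℕ, ((fromBlocks A D 0 N) ^ k) (Sum.inr i) (Sum.inr j) = (N ^ k) i j := by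
      intro k
      obtain ⟨X, hX⟩ := pow_blockTri A D N k
      rw [hX]; rfl
    simp only [exp_entry, hN, Matrix.fromBlocks_apply₂₂]

theorem exp_sq_zero (M : Matrix m m ℝ) (hM : M * M = 0) : exp M = 1 + M := by
  have hpow : ∀ k ∉ ({0, 1} : Finset ℕ), (k !⁻¹ : ℝ) • M ^ k = 0 := by
    intro k hk
    simp only [Finset.mem_insert, Finset.mem_singleton] at hk
    have h2 : 2 ≤ k := by omega
    have hz : M ^ k = 0 := by
      have : M ^ k = M ^ 2 * M ^ (k - 2) := by
        rw [← pow_add]; congr 1; omega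
      rw [this, pow_two, hM, zero_mul]
    rw [hz, smul_zero]
  have := congrFun (exp_eq_tsum (𝕂 := ℝ)) M
  rw [this, tsum_eq_sum hpow, Finset.sum_pair (by norm_num : (0 : ℕ) ≠ 1)]
  norm_num

set_option maxHeartbeats 1000000 in
theorem main_aux
    (d p : ℕ) (hd : 0 < d) (hp : 0 < p)
    (A : Matrix (Fin d) (Fin d) ℝ) (B : Matrix (Fin d) (Fin p) ℝ)
    (a b : Fin d → ℝ)
    (C : Matrix (Fin d ⊕ (Fin p ⊕ (Fin 1 ⊕ Fin 1))) (Fin d ⊕ (Fin p ⊕ (Fin 1 ⊕ Fin 1))) ℝ)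
    (hC : C = Matrix.fromBlocks A
        (Matrix.fromCols B (Matrix.fromCols (Matrix.replicateCol (Fin 1) a) (Matrix.replicateCol (Fin 1) b)))
        0
        (Matrix.fromBlocks 0 0 0
          (Matrix.fromBlocks 0 (1 : Matrix (Fin 1) (Fin 1) ℝ) 0 0)))
    (h : ℝ) (hh : 0 ≤ h) :
    (∀ i j, NormedSpace.exp (h • C) (Sum.inl i) (Sum.inl j) =
        NormedSpace.exp (h • A) i j) ∧
    (∀ i j, NormedSpace.exp (h • C) (Sum.inl i) (Sum.inr (Sum.inl j)) =
        ∫ s in (0 : ℝ)..h, (NormedSpace.exp ((h - s) • A) * B) i j) ∧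
    (∀ i, NormedSpace.exp (h • C) (Sum.inl i) (Sum.inr (Sum.inr (Sum.inl 0))) =
        ∫ s in (0 : ℝ)..h, (NormedSpace.exp ((h - s) • A)).mulVec a i) ∧
    (∀ i, NormedSpace.exp (h • C) (Sum.inl i) (Sum.inr (Sum.inr (Sum.inr 0))) =
        ∫ s in (0 : ℝ)..h, (NormedSpace.exp ((h - s) • A)).mulVec (b + s • a) i) := by
  classical
  set N : Matrix (Fin p ⊕ (Fin 1 ⊕ Fin 1)) (Fin p ⊕ (Fin 1 ⊕ Fin 1)) ℝ :=
    Matrix.fromBlocks 0 0 0 (Matrix.fromBlocks 0 (1 : Matrix (Fin 1) (Fin 1) ℝ) 0 0) with hN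
  set D : Matrix (Fin d) (Fin p ⊕ (Fin 1 ⊕ Fin 1)) ℝ :=
    Matrix.fromCols B (Matrix.fromCols (Matrix.replicateCol (Fin 1) a) (Matrix.replicateCol (Fin 1) b)) with hD
  set Abar : Matrix (Fin d ⊕ (Fin p ⊕ (Fin 1 ⊕ Fin 1))) (Fin d ⊕ (Fin p ⊕ (Fin 1 ⊕ Fin 1))) ℝ :=
    Matrix.fromBlocks A 0 0 N with hAbar
  have hNN : N * N = 0 := by
    rw [hN, Matrix.fromBlocks_multiply]
    simp [Matrix.fromBlocks_multiply, Matrix.fromBlocks_zero]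
  have hsmulAbar : ∀ t : ℝ, t • Abar = Matrix.fromBlocks (t • A) 0 0 (t • N) := by
    intro t
    rw [hAbar, Matrix.fromBlocks_smul]
    simp
  have hexpAbar : ∀ t : ℝ, exp (t • Abar)
      = Matrix.fromBlocks (exp (t • A)) 0 0 (exp (t • N)) := by
    intro t
    rw [hsmulAbar, exp_blockDiag]
  have hCsub : C - Abar = Matrix.fromBlocks 0 D 0 0 := by
    rw [hC, hAbar]
    ext i j
    rcases i with i | i <;> rcases j with j | j <;> simp [Matrix.sub_apply]
  have hsmulC : ∀ s : ℝ, s • C = Matrix.fromBlocks (s • A) (s • D) 0 (s • N) := by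
    intro s
    rw [hC, Matrix.fromBlocks_smul]
    simp
  have hexpN : ∀ s : ℝ, exp (s • N) = 1 + s • N := by
    intro s
    refine exp_sq_zero _ ?_
    rw [smul_mul_assoc, mul_smul_comm, hNN, smul_zero, smul_zero]
  have hDN : D * N = Matrix.fromCols 0 (Matrix.fromCols 0 (Matrix.replicateCol (Fin 1) a)) := by
    rw [hD, hN]
    simp [Matrix.fromCols_mul_fromBlocks]
  set g : ℝ → Matrix (Fin d ⊕ (Fin p ⊕ (Fin 1 ⊕ Fin 1))) (Fin d ⊕ (Fin p ⊕ (Fin 1 ⊕ Fin 1))) ℝ :=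
    fun s => exp ((h - s) • Abar) * ((C - Abar) * exp (s • C)) with hg
  have hderiv : ∀ s ∈ Set.uIcc (0 : ℝ) h,
      HasDerivAt (fun t : ℝ => exp ((h - t) • Abar) * exp (t • C)) (g s) s := by
    intro s _
    have h1 : HasDerivAt (fun t : ℝ => exp ((h - t) • Abar))
        ((-1 : ℝ) • (exp ((h - s) • Abar) * Abar)) s := by
      have hcomp := HasDerivAt.scomp_of_eq s
        (hasDerivAt_exp_smul_const (𝕂 := ℝ) Abar (h - s))
        ((hasDerivAt_id s).const_sub h) rfl
      exact hcomp
    have h2 : HasDerivAt (fun t : ℝ => exp (t • C)) (C * exp (s • C)) s :=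
      hasDerivAt_exp_smul_const' (𝕂 := ℝ) C s
    have h3 := h1.mul h2
    refine h3.congr_deriv ?_
    rw [hg]
    simp only [neg_one_smul, neg_mul]
    noncomm_ring
  have hgcont : Continuous g := by
    have e1 : Continuous fun s : ℝ => exp ((h - s) • Abar) :=
      exp_continuous.comp ((continuous_const.sub continuous_id).smul continuous_const)
    have e2 : Continuous fun s : ℝ => exp (s • C) :=
      exp_continuous.comp (continuous_id.smul continuous_const)
    exact e1.mul (continuous_const.mul e2)
  have hint := hgcont.intervalIntegrable (μ := MeasureTheory.volume) 0 h
  have key : exp (h • C) = exp (h • Abar) + ∫ s in (0 : ℝ)..h, g s := by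
    have hftc := intervalIntegral.integral_eq_sub_of_hasDerivAt hderiv hint
    simp only [sub_self, zero_smul, exp_zero, one_mul, sub_zero, mul_one] at hftc
    rw [hftc]
    abel
  have hgs : ∀ s : ℝ, g s
      = Matrix.fromBlocks 0 (exp ((h - s) • A) * (D + s • (D * N))) 0 0 := by
    intro s
    obtain ⟨X, hX⟩ := exp_blockTri (s • A) (s • D) (s • N)
    rw [hg]
    simp only []
    rw [hexpAbar, hCsub, hsmulC, hX, hexpN s, Matrix.fromBlocks_multiply,
      Matrix.fromBlocks_multiply]
    simp [Matrix.mul_add, Matrix.mul_smul]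
  have hrow : ∀ (i : Fin d) (κ : Fin p ⊕ (Fin 1 ⊕ Fin 1)),
      exp (h • C) (Sum.inl i) (Sum.inr κ)
        = ∫ s in (0 : ℝ)..h, g s (Sum.inl i) (Sum.inr κ) := by
    intro i κ
    have hcomm := ContinuousLinearMap.intervalIntegral_comp_comm (E := Matrix (Fin d ⊕ (Fin p ⊕ (Fin 1 ⊕ Fin 1))) (Fin d ⊕ (Fin p ⊕ (Fin 1 ⊕ Fin 1))) ℝ) (entryCLM (Sum.inl i) (Sum.inr κ)) hint
    rw [key, Matrix.add_apply, hexpAbar]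
    have hz : Matrix.fromBlocks (exp (h • A)) 0 0 (exp (h • N))
        (Sum.inl i) (Sum.inr κ) = 0 := by simp
    rw [hz, zero_add]
    exact hcomm.symm
  refine ⟨fun i j => ?_, fun i j => ?_, fun i => ?_, fun i => ?_⟩
  · -- E₁₁
    have hrow' : exp (h • C) (Sum.inl i) (Sum.inl j)
        = exp (h • Abar) (Sum.inl i) (Sum.inl j)
          + ∫ s in (0 : ℝ)..h, g s (Sum.inl i) (Sum.inl j) := by
      have hcomm := ContinuousLinearMap.intervalIntegral_comp_comm (E := Matrix (Fin d ⊕ (Fin p ⊕ (Fin 1 ⊕ Fin 1))) (Fin d ⊕ (Fin p ⊕ (Fin 1 ⊕ Fin 1))) ℝ) (entryCLM (Sum.inl i) (Sum.inl j)) hint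
      rw [key, Matrix.add_apply]
      congr 1
      exact hcomm.symm
    rw [hrow', hexpAbar]
    have hz : Set.EqOn (fun s => g s (Sum.inl i) (Sum.inl j)) (fun _ => (0 : ℝ))
        (Set.uIcc 0 h) := by
      intro s _
      simp only [hgs]
      simp
    rw [intervalIntegral.integral_congr hz]
    simp
  · -- E₁₂
    rw [hrow]
    refine intervalIntegral.integral_congr ?_
    intro s _
    simp only [hgs]
    simp only [Matrix.fromBlocks_apply₁₂, Matrix.mul_add, Matrix.mul_smul, hDN,
      Matrix.add_apply, Matrix.smul_apply, smul_eq_mul]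
    simp [hD, Matrix.mul_fromCols]
  · -- E₁₃
    rw [hrow]
    refine intervalIntegral.integral_congr ?_
    intro s _
    simp only [hgs]
    simp only [Matrix.fromBlocks_apply₁₂, Matrix.mul_add, Matrix.mul_smul, hDN,
      Matrix.add_apply, Matrix.smul_apply, smul_eq_mul]
    simp [hD, Matrix.mul_fromCols, Matrix.mul_apply, Matrix.mulVec, dotProduct,
      Matrix.replicateCol_apply]
  · -- E₁₄
    rw [hrow]
    refine intervalIntegral.integral_congr ?_
    intro s _
    simp only [hgs]
    simp only [Matrix.fromBlocks_apply₁₂, Matrix.mul_add, Matrix.mul_smul, hDN,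
      Matrix.add_apply, Matrix.smul_apply, smul_eq_mul, Matrix.mulVec_add, Matrix.mulVec_smul,
      Pi.add_apply, Pi.smul_apply]
    simp [hD, Matrix.mul_fromCols, Matrix.mul_apply, Matrix.mulVec, dotProduct,
      Matrix.replicateCol_apply, mul_add, Finset.mul_sum]

end BlockExpAux

end BlockExpAuxSection


/-- Block-exponential formula for the Local Linearization scheme: the first
block row of `exp(h·C)`, where `C = [[A, B, a, b], [0,0,0,0], [0,0,0,1], [0,0,0,0]]`,
is given by `E₁₁ = exp(hA)`, `E₁₂ = ∫₀ʰ exp((h−s)A)·B ds`,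
`E₁₃ = ∫₀ʰ exp((h−s)A)·a ds` and `E₁₄ = ∫₀ʰ exp((h−s)A)·(b + s·a) ds`. -/
theorem block_exponential_formula
    (d p : ℕ) (hd : 0 < d) (hp : 0 < p)
    (A : Matrix (Fin d) (Fin d) ℝ) (B : Matrix (Fin d) (Fin p) ℝ)
    (a b : Fin d → ℝ)
    (C : Matrix (Fin d ⊕ (Fin p ⊕ (Fin 1 ⊕ Fin 1))) (Fin d ⊕ (Fin p ⊕ (Fin 1 ⊕ Fin 1))) ℝ)
    (hC : C = Matrix.fromBlocks A
        (Matrix.fromCols B (Matrix.fromCols (Matrix.replicateCol (Fin 1) a) (Matrix.replicateCol (Fin 1) b)))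
        0
        (Matrix.fromBlocks 0 0 0
          (Matrix.fromBlocks 0 (1 : Matrix (Fin 1) (Fin 1) ℝ) 0 0)))
    (h : ℝ) (hh : 0 ≤ h) :
    (∀ i j, NormedSpace.exp (h • C) (Sum.inl i) (Sum.inl j) =
        NormedSpace.exp (h • A) i j) ∧
    (∀ i j, NormedSpace.exp (h • C) (Sum.inl i) (Sum.inr (Sum.inl j)) =
        ∫ s in (0 : ℝ)..h, (NormedSpace.exp ((h - s) • A) * B) i j) ∧
    (∀ i, NormedSpace.exp (h • C) (Sum.inl i) (Sum.inr (Sum.inr (Sum.inl 0))) =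
        ∫ s in (0 : ℝ)..h, (NormedSpace.exp ((h - s) • A)).mulVec a i) ∧
    (∀ i, NormedSpace.exp (h • C) (Sum.inl i) (Sum.inr (Sum.inr (Sum.inr 0))) =
        ∫ s in (0 : ℝ)..h, (NormedSpace.exp ((h - s) • A)).mulVec (b + s • a) i) := by
  exact BlockExpAux.main_aux d p hd hp A B a b C hC h hh
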